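/- Let (R^{(ρ)})_{ρ≤η} be a resolution family with R^{(0)} = ≼, z ∈ a^{<ω}\{∅}, and enumerate {z^ρ : ρ ≤ η} as z^{ξ_n} ≺ z^{ξ_{n-1}} ≺ ... ≺ z^{ξ_1} with ξ_1 < ... < ξ_n = η. Then for 1 ≤ i < n, the ordinal η_i := {ρ ≤ η : z^{ξ_i} ≼ z^ρ} (viewed as an ordinal, i.e., an initial segment of ordinals ≤ η) is a successor ordinal. -/

import Mathlib

def IsTreeRel {a : Type*} (R : List a → List a → Prop) : Prop :=
  (∀ s, R s s) ∧ (∀ s t, R s t → R t s → s = t) ∧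
  (∀ s t u, R s t → R t u → R s u) ∧ (∀ t, R [] t) ∧
  (∀ t, {s | R s t}.Finite) ∧
  (∀ t s s', R s t → R s' t → R s s' ∨ R s' s)

def IsResolutionFamily {a : Type*} (η : Ordinal)
    (R : Ordinal → List a → List a → Prop) : Prop :=
  (∀ ρ ≤ η, IsTreeRel (R ρ)) ∧
  (∀ ρ < η, ∀ s t, R (ρ + 1) s t → R ρ s t) ∧
  (∀ ρ < η, ∀ s t u, R ρ s t → R ρ t u → R (ρ + 1) s u → R (ρ + 1) s t) ∧
  (∀ l ≤ η, Order.IsSuccLimit l → ∀ s t, R l s t ↔ ∀ ρ < l, R ρ s t)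

def IsMaxIdx {a : Type*} (R : List a → List a → Prop) (z : List a) (r : ℕ) : Prop :=
  r < z.length ∧ R (z.take r) z ∧ ∀ r' < z.length, R (z.take r') z → r' ≤ r


lemma Rmono {a : Type*} (η : Ordinal) (R : Ordinal → List a → List a → Prop)
    (hres : IsResolutionFamily η R) :
    ∀ ρ' ≤ η, ∀ ρ ≤ ρ', ∀ s t : List a, R ρ' s t → R ρ s t := by
  obtain ⟨h1, h2, h3, h4⟩ := hres
  intro ρ'
  induction ρ' using Ordinal.induction with
  | _ ρ' IH =>
    intro hρ'η ρ hρ s t hst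
    rcases eq_or_lt_of_le hρ with rfl | hlt
    · exact hst
    rcases Ordinal.zero_or_succ_or_isSuccLimit ρ' with h0' | ⟨μ, rfl⟩ | hl
    · exact absurd (h0' ▸ hlt) (not_lt_zero (a := ρ))
    · have hμη : μ < η := Order.succ_le_iff.mp hρ'η
      have hR : R μ s t := h2 μ hμη s t (by rwa [Ordinal.add_one_eq_succ])
      exact IH μ (Order.lt_succ μ) hμη.le ρ (Order.le_of_lt_succ hlt) s t hR
    · exact (h4 ρ' hρ'η hl s t).mp hst ρ hlt

theorem eta_i_is_successor {a : Type*} [Fintype a]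
    (η : Ordinal) (R : Ordinal → List a → List a → Prop)
    (hres : IsResolutionFamily η R)
    (h0 : ∀ s t : List a, R 0 s t ↔ s <+: t)
    (z : List a) (hz : z ≠ [])
    -- `zrho ρ` is `z^ρ`, the restriction of `z` to the largest `r < |z|` with `z↾r R^{(ρ)} z`
    (zrho : Ordinal → List a)
    (hzrho : ∀ ρ ≤ η, ∃ r, IsMaxIdx (R ρ) z r ∧ zrho ρ = z.take r)
    -- the enumeration `{z^ρ | ρ ≤ η} = {z^{ξ_i} | 1 ≤ i ≤ n}` with `ξ_1 < ... < ξ_n = η`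
    (n : ℕ) (hn : 1 ≤ n) (ξ : ℕ → Ordinal)
    (hξη : ∀ i, 1 ≤ i → i ≤ n → ξ i ≤ η)
    (hξmono : ∀ i j, 1 ≤ i → i < j → j ≤ n → ξ i < ξ j)
    (hξtop : ξ n = η)
    (henum : ∀ ρ ≤ η, ∃ i, 1 ≤ i ∧ i ≤ n ∧ zrho ρ = zrho (ξ i))
    (hchain : ∀ i, 1 ≤ i → i < n →
      zrho (ξ (i + 1)) <+: zrho (ξ i) ∧ zrho (ξ (i + 1)) ≠ zrho (ξ i)) :
    -- for `1 ≤ i < n`, the initial segment `{ρ ≤ η | z^{ξ_i} ≼ z^ρ}` is a successor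
    -- ordinal, i.e. of the form `{ρ | ρ ≤ ν} = Iic ν`
    ∀ i, 1 ≤ i → i < n →
      ∃ ν : Ordinal, {ρ : Ordinal | ρ ≤ η ∧ zrho (ξ i) <+: zrho ρ} = Set.Iic ν := by
  intro i hi1 hi2
  have hξiη : ξ i ≤ η := hξη i hi1 hi2.le
  -- monotonicity of zrho
  have hmono : ∀ ρ ρ', ρ ≤ ρ' → ρ' ≤ η → zrho ρ' <+: zrho ρ := by
    intro ρ ρ' h hη'
    obtain ⟨r, ⟨hr1, hr2, hr3⟩, he⟩ := hzrho ρ (h.trans hη')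
    obtain ⟨r', ⟨hr1', hr2', hr3'⟩, he'⟩ := hzrho ρ' hη'
    have hle : r' ≤ r := hr3 r' hr1' (Rmono η R hres ρ' hη' ρ h _ _ hr2')
    rw [he, he']
    have : (z.take r).take r' = z.take r' := by
      rw [List.take_take, Nat.min_eq_left hle]
    exact this ▸ List.take_prefix r' (z.take r)
  set S := {ρ : Ordinal | ρ ≤ η ∧ zrho (ξ i) <+: zrho ρ} with hS
  have hmem : ξ i ∈ S := ⟨hξiη, List.prefix_refl _⟩
  have hne : S.Nonempty := ⟨_, hmem⟩
  have hbdd : BddAbove S := ⟨η, fun ρ hρ => hρ.1⟩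
  have hdc : ∀ ρ' ρ, ρ' ≤ ρ → ρ ∈ S → ρ' ∈ S := fun ρ' ρ h hρ =>
    ⟨h.trans hρ.1, hρ.2.trans (hmono ρ' ρ h hρ.1)⟩
  set ν := sSup S with hν'
  by_cases hν : ν ∈ S
  · exact ⟨ν, Set.Subset.antisymm (fun ρ hρ => le_csSup hbdd hρ)
      (fun ρ hρ => hdc ρ ν hρ hν)⟩
  · have hIio : S = Set.Iio ν := by
      ext ρ
      constructor
      · intro hρ
        exact lt_of_le_of_ne (le_csSup hbdd hρ) (by rintro rfl; exact hν hρ)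
      · intro hρ
        obtain ⟨x, hx, hρx⟩ := exists_lt_of_lt_csSup hne hρ
        exact hdc ρ x hρx.le hx
    have hνη : ν ≤ η := csSup_le hne fun ρ hρ => hρ.1
    rcases Ordinal.zero_or_succ_or_isSuccLimit ν with h0' | ⟨μ, hμ⟩ | hl
    · exact absurd (hIio ▸ hmem) (by simp [h0'])
    · refine ⟨μ, ?_⟩
      rw [hIio, ← hμ]
      ext ρ
      simp only [Set.mem_Iio, Set.mem_Iic]
      exact ⟨fun h => Order.le_of_lt_succ h, fun h => Order.lt_succ_of_le h⟩
    · -- limit case: derive a contradiction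
      exfalso
      -- zrho ν = zrho ρ0 for some ρ0 < ν
      classical
      have hTne : ∃ k : ℕ, ∃ ρ, ρ < ν ∧ IsMaxIdx (R ρ) z k ∧ zrho ρ = z.take k := by
        obtain ⟨r, hr, he⟩ := hzrho 0 (zero_le (a := η))
        exact ⟨r, 0, hl.pos, hr, he⟩
      set r0 := Nat.find hTne with hr0def
      obtain ⟨ρ0, hρ0ν, ⟨hr0len, hr0R, hr0max⟩, hzρ0⟩ := Nat.find_spec hTne
      have hr0min : ∀ k, (∃ ρ, ρ < ν ∧ IsMaxIdx (R ρ) z k ∧ zrho ρ = z.take k) →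
          r0 ≤ k := fun k hk => Nat.find_le hk
      have hρ0η : ρ0 ≤ η := hρ0ν.le.trans hνη
      -- R ν (z.take r0) z
      have hRν : R ν (z.take r0) z := by
        have h4 := hres.2.2.2
        rw [h4 ν hνη hl]
        intro σ hσν
        rcases le_or_gt σ ρ0 with hle | hltσ
        · exact Rmono η R hres ρ0 hρ0η σ hle _ _ hr0R
        · have hση : σ ≤ η := hσν.le.trans hνη
          obtain ⟨rσ, ⟨hrσlen, hrσR, hrσmax⟩, hzσ⟩ := hzrho σ hση
          have h1 : rσ ≤ r0 := hr0max rσ hrσlen (Rmono η R hres σ hση ρ0 hltσ.le _ _ hrσR)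
          have h2 : r0 ≤ rσ := hr0min rσ ⟨σ, hσν, ⟨hrσlen, hrσR, hrσmax⟩, hzσ⟩
          have : rσ = r0 := le_antisymm h1 h2
          rw [← this]
          exact hrσR
      -- zrho ν = z.take r0
      obtain ⟨rν, ⟨hrνlen, hrνR, hrνmax⟩, hzν⟩ := hzrho ν hνη
      have h1 : rν ≤ r0 := hr0max rν hrνlen (Rmono η R hres ν hνη ρ0 hρ0ν.le _ _ hrνR)
      have h2 : r0 ≤ rν := hrνmax r0 hr0len hRν
      have hzνeq : zrho ν = zrho ρ0 := by rw [hzν, hzρ0, le_antisymm h1 h2]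
      have hρ0S : ρ0 ∈ S := hIio ▸ hρ0ν
      exact hν ⟨hνη, hzνeq ▸ hρ0S.2⟩
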